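/- Let d ≥ 3 be an integer and let F, G be a maximal solution of the planar ODE system F' = −F² − G, G' = F(1 − d·G) with initial data satisfying G(0) < 1/d. Then the solution is defined for all t ≥ 0 and the functions F and G are bounded on [0, ∞). -/

import Mathlib

open Set Real NNReal

namespace RadialAux

/-- clamp to `[-B, B]` -/
noncomputable def cl (B x : ℝ) : ℝ := max (-B) (min B x)

lemma cl_lip (B : ℝ) : LipschitzWith 1 (cl B) :=
  (LipschitzWith.const_min LipschitzWith.id B).const_max (-B)

lemma abs_cl_le {B : ℝ} (hB : 0 ≤ B) (x : ℝ) : |cl B x| ≤ B := by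
  rw [abs_le, cl]
  constructor
  · exact le_max_left _ _
  · exact max_le (by linarith) (min_le_left _ _)

lemma cl_eq {B x : ℝ} (hx : |x| ≤ B) : cl B x = x := by
  rw [abs_le] at hx
  rw [cl, min_eq_right hx.2, max_eq_right hx.1]

lemma abs_cl_sub_le (B x y : ℝ) : |cl B x - cl B y| ≤ |x - y| := by
  have := (cl_lip B).dist_le_mul x y
  simpa [Real.dist_eq] using this

/-- Global-in-time existence for a time-independent, globally Lipschitz, globally
bounded vector field. -/
lemma global_existence {E : Type*} [NormedAddCommGroup E] [NormedSpace ℝ E] [CompleteSpace E]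
    {w : E → E} {L : ℝ≥0} {C : ℝ} (hC : 0 < C)
    (hL : LipschitzWith L w) (hb : ∀ p, ‖w p‖ ≤ C) (x₀ : E) :
    ∃ g : ℝ → E, g 0 = x₀ ∧ ∀ t : ℝ, HasDerivAt g (w (g t)) t := by
  -- solutions on `Ioo (-(n+1)) (n+1)`
  have hsol : ∀ n : ℕ, ∃ f : ℝ → E, f 0 = x₀ ∧
      ∀ t ∈ Ioo (-((n : ℝ)+1)) ((n : ℝ)+1), HasDerivAt f (w (f t)) t := by
    intro n
    have hn : (0:ℝ) ≤ n := Nat.cast_nonneg n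
    have hpl : IsPicardLindelof (fun _ : ℝ => w) (tmin := -((n:ℝ)+1)) (tmax := (n:ℝ)+1)
        ⟨0, by constructor <;> linarith⟩ x₀ (C * (n+1)).toNNReal 0 C.toNNReal L := by
      refine ⟨fun t _ => hL.lipschitzOnWith, fun x _ => continuousOn_const, fun t _ x _ => ?_, ?_⟩
      · rw [Real.coe_toNNReal _ hC.le]; exact hb x
      · show (C.toNNReal : ℝ) * max (((n:ℝ)+1) - 0) (0 - -((n:ℝ)+1))
          ≤ ((C * (n+1)).toNNReal : ℝ) - ((0:ℝ≥0):ℝ)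
        rw [Real.coe_toNNReal _ hC.le, Real.coe_toNNReal _ (mul_nonneg hC.le (by positivity)),
          NNReal.coe_zero, sub_zero, sub_zero, zero_sub, neg_neg, max_self]
    obtain ⟨f, hf0, hf⟩ := hpl.exists_eq_forall_mem_Icc_hasDerivWithinAt₀
    exact ⟨f, hf0, fun t ht => (hf t (Ioo_subset_Icc_self ht)).hasDerivAt
      (Icc_mem_nhds ht.1 ht.2)⟩
  choose sol hsol0 hsolD using hsol
  -- consistency
  have huniq : ∀ n m : ℕ, n ≤ m →
      EqOn (sol n) (sol m) (Ioo (-((n : ℝ)+1)) ((n : ℝ)+1)) := by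
    intro n m hnm
    have hc : (n : ℝ) ≤ m := Nat.cast_le.mpr hnm
    have hn : (0:ℝ) ≤ n := Nat.cast_nonneg n
    have hsub : Ioo (-((n : ℝ)+1)) ((n : ℝ)+1) ⊆ Ioo (-((m : ℝ)+1)) ((m : ℝ)+1) :=
      Ioo_subset_Ioo (by linarith) (by linarith)
    exact ODE_solution_unique_of_mem_Ioo (v := fun _ : ℝ => w) (s := fun _ => univ)
      (fun t _ => hL.lipschitzOnWith) (by constructor <;> linarith)
      (fun t ht => ⟨hsolD n t ht, trivial⟩)
      (fun t ht => ⟨hsolD m t (hsub ht), trivial⟩)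
      ((hsol0 n).trans (hsol0 m).symm)
  -- patched global solution
  refine ⟨fun t => sol (⌈|t|⌉₊ + 1) t, by simpa using hsol0 1, fun t => ?_⟩
  set n := ⌈|t|⌉₊ + 1 with hn
  have htmem : t ∈ Ioo (-((n : ℝ)+1)) ((n : ℝ)+1) := by
    have h1 : |t| ≤ ⌈|t|⌉₊ := Nat.le_ceil _
    have : |t| < (n : ℝ) + 1 := by
      rw [hn]; push_cast; linarith
    rw [abs_lt] at this
    exact ⟨by linarith [this.1], this.2⟩
  have heq : (fun s => sol (⌈|s|⌉₊ + 1) s) =ᶠ[nhds t] sol n := by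
    filter_upwards [Metric.ball_mem_nhds t one_half_pos] with s hs
    have hst : |s - t| < 1/2 := by simpa [Real.dist_eq] using hs
    set m := ⌈|s|⌉₊ + 1 with hm
    rcases le_total m n with h | h
    · apply huniq m n h
      have h1 : |s| ≤ ⌈|s|⌉₊ := Nat.le_ceil _
      have : |s| < (m : ℝ) + 1 := by rw [hm]; push_cast; linarith
      rw [abs_lt] at this
      exact ⟨by linarith [this.1], this.2⟩
    · refine (huniq n m h ?_).symm
      have h2 : |s| ≤ |t| + 1/2 := by
        calc |s| = |t + (s - t)| := by ring_nf
        _ ≤ |t| + |s - t| := abs_add_le _ _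
        _ ≤ |t| + 1/2 := by linarith
      have h3 : |t| ≤ ⌈|t|⌉₊ := Nat.le_ceil _
      have : |s| < (n : ℝ) + 1 := by rw [hn]; push_cast; linarith
      rw [abs_lt] at this
      exact ⟨by linarith [this.1], this.2⟩
  exact (hsolD n t htmem).congr_of_eventuallyEq heq



/-- the vector field -/
def vf (D : ℝ) (p : ℝ × ℝ) : ℝ × ℝ := (-p.1 ^ 2 - p.2, p.1 * (1 - D * p.2))

/-- conserved energy -/
noncomputable def En (D : ℝ) (p : ℝ × ℝ) : ℝ :=
  (1 - D * p.2) ^ (-(2/D)) * (p.1 ^ 2 + 1/D) + (2/(D*(D-2))) * (1 - D * p.2) ^ (1 - 2/D)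

lemma hasDerivAt_fst {g : ℝ → ℝ × ℝ} {p : ℝ × ℝ} {t : ℝ} (h : HasDerivAt g p t) :
    HasDerivAt (fun s => (g s).1) p.1 t := by
  exact (ContinuousLinearMap.fst ℝ ℝ ℝ).hasFDerivAt.comp_hasDerivAt t h

lemma hasDerivAt_snd {g : ℝ → ℝ × ℝ} {p : ℝ × ℝ} {t : ℝ} (h : HasDerivAt g p t) :
    HasDerivAt (fun s => (g s).2) p.2 t := by
  exact (ContinuousLinearMap.snd ℝ ℝ ℝ).hasFDerivAt.comp_hasDerivAt t h

/-- the energy is conserved along solutions in the region `1 - D G > 0` -/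
lemma En_deriv {D : ℝ} (hD : 3 ≤ D) {g : ℝ → ℝ × ℝ} {t : ℝ}
    (hg : HasDerivAt g (vf D (g t)) t) (hρ : 0 < 1 - D * (g t).2) :
    HasDerivAt (fun s => En D (g s)) 0 t := by
  have hD0 : D ≠ 0 := by linarith
  have hD2 : D - 2 ≠ 0 := by linarith
  have hρ' : (1 : ℝ) - D * (g t).2 ≠ 0 := ne_of_gt hρ
  have hF : HasDerivAt (fun s => (g s).1) (-(g t).1 ^ 2 - (g t).2) t := hasDerivAt_fst hg
  have hG : HasDerivAt (fun s => (g s).2) ((g t).1 * (1 - D * (g t).2)) t := hasDerivAt_snd hg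
  have hφ : HasDerivAt (fun s => 1 - D * (g s).2)
      (-(D * ((g t).1 * (1 - D * (g t).2)))) t := by
    simpa using (hG.const_mul D).const_sub 1
  have h1 : HasDerivAt (fun s => (1 - D * (g s).2) ^ (-(2/D)))
      ((-(D * ((g t).1 * (1 - D * (g t).2)))) * (-(2/D)) *
        (1 - D * (g t).2) ^ (-(2/D) - 1)) t :=
    hφ.rpow_const (Or.inl hρ')
  have h2 : HasDerivAt (fun s => ((g s).1 ^ 2 + 1/D))
      (2 * (g t).1 * (-(g t).1 ^ 2 - (g t).2)) t := by
    simpa using (hF.pow 2).add_const (1/D)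
  have h4 : HasDerivAt (fun s => (1 - D * (g s).2) ^ ((1:ℝ) - 2/D))
      ((-(D * ((g t).1 * (1 - D * (g t).2)))) * ((1:ℝ) - 2/D) *
        (1 - D * (g t).2) ^ ((1:ℝ) - 2/D - 1)) t :=
    hφ.rpow_const (Or.inl hρ')
  have htot := (h1.mul h2).add ((h4).const_mul (2/(D*(D-2))))
  have hEeq : (fun s => En D (g s)) = fun s =>
      (1 - D * (g s).2) ^ (-(2/D)) * ((g s).1 ^ 2 + 1/D) +
        (2/(D*(D-2))) * (1 - D * (g s).2) ^ ((1:ℝ) - 2/D) := rfl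
  rw [hEeq]
  refine htot.congr_deriv ?_
  have e1 : (1 - D * (g t).2) ^ (-(2/D) - 1)
      = (1 - D * (g t).2) ^ (-(2/D)) / (1 - D * (g t).2) := by
    rw [Real.rpow_sub hρ, Real.rpow_one]
  have e2 : (1 - D * (g t).2) ^ ((1:ℝ) - 2/D - 1)
      = (1 - D * (g t).2) ^ (-(2/D)) := by
    norm_num
  rw [e1, e2]
  field_simp
  ring


lemma level_bound {D : ℝ} (hD : 3 ≤ D) {E₀ : ℝ} (hE₀ : 0 < E₀) {p : ℝ × ℝ}
    (hρ : 0 < 1 - D * p.2) (hE : En D p = E₀) :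
    (D * E₀) ^ (-(D/2)) ≤ 1 - D * p.2 ∧
    1 - D * p.2 ≤ (E₀ * (D*(D-2)) / 2) ^ (D/(D-2)) ∧
    p.1 ^ 2 ≤ E₀ * ((E₀ * (D*(D-2)) / 2) ^ (D/(D-2))) ^ (2/D) := by
  have hD0 : (0:ℝ) < D := by linarith
  have hD2 : (0:ℝ) < D - 2 := by linarith
  set ρ := 1 - D * p.2 with hρdef
  have hX : 0 < ρ ^ (-(2/D)) := Real.rpow_pos_of_pos hρ _
  have hY : 0 < ρ ^ ((1:ℝ) - 2/D) := Real.rpow_pos_of_pos hρ _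
  have hc : (0:ℝ) < 2/(D*(D-2)) := by positivity
  have hEeq : ρ ^ (-(2/D)) * (p.1 ^ 2 + 1/D) + (2/(D*(D-2))) * ρ ^ ((1:ℝ) - 2/D) = E₀ := hE
  have hsq : (0:ℝ) ≤ p.1 ^ 2 := sq_nonneg _
  have h1 : ρ ^ (-(2/D)) * (1/D) ≤ E₀ := by
    nlinarith [mul_nonneg hX.le hsq, (mul_pos hc hY).le]
  have hXle : ρ ^ (-(2/D)) ≤ D * E₀ := by
    have h2 := mul_le_mul_of_nonneg_left h1 hD0.le
    have h3 : D * (ρ ^ (-(2/D)) * (1/D)) = ρ ^ (-(2/D)) := by field_simp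
    linarith
  have h1' : (2/(D*(D-2))) * ρ ^ ((1:ℝ) - 2/D) ≤ E₀ := by
    nlinarith [mul_nonneg hX.le (by positivity : (0:ℝ) ≤ p.1 ^ 2 + 1/D)]
  have hYle : ρ ^ ((1:ℝ) - 2/D) ≤ E₀ * (D*(D-2)) / 2 := by
    have h2 := mul_le_mul_of_nonneg_right h1' (by positivity : (0:ℝ) ≤ (D*(D-2))/2)
    have h3 : (2/(D*(D-2))) * ρ ^ ((1:ℝ) - 2/D) * ((D*(D-2))/2) = ρ ^ ((1:ℝ) - 2/D) := by
      field_simp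
    have h4 : E₀ * ((D*(D-2))/2) = E₀ * (D*(D-2)) / 2 := by ring
    linarith
  have bound2 : ρ ≤ (E₀ * (D*(D-2)) / 2) ^ (D/(D-2)) := by
    have h5 := Real.rpow_le_rpow hY.le hYle (by positivity : (0:ℝ) ≤ D/(D-2))
    calc ρ = ρ ^ (((1:ℝ) - 2/D) * (D/(D-2))) := by
          rw [show ((1:ℝ) - 2/D) * (D/(D-2)) = (1:ℝ) by field_simp, Real.rpow_one]
      _ = (ρ ^ ((1:ℝ) - 2/D)) ^ (D/(D-2)) := Real.rpow_mul hρ.le _ _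
      _ ≤ (E₀ * (D*(D-2)) / 2) ^ (D/(D-2)) := h5
  refine ⟨?_, bound2, ?_⟩
  · have h5 := Real.rpow_le_rpow_of_nonpos hX hXle
      (neg_nonpos.mpr (by positivity : (0:ℝ) ≤ D/2))
    calc (D * E₀) ^ (-(D/2)) ≤ (ρ ^ (-(2/D))) ^ (-(D/2)) := h5
      _ = ρ ^ ((-(2/D)) * (-(D/2))) := (Real.rpow_mul hρ.le _ _).symm
      _ = ρ := by
          rw [show (-(2/D)) * (-(D/2)) = (1:ℝ) by field_simp, Real.rpow_one]
  · have hx : ρ ^ (-(2/D)) * p.1 ^ 2 ≤ E₀ := by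
      nlinarith [mul_pos hX (by positivity : (0:ℝ) < 1/D), (mul_pos hc hY).le]
    have hr2 : 0 < ρ ^ ((2:ℝ)/D) := Real.rpow_pos_of_pos hρ _
    have hinv : ρ ^ (-(2/D)) * ρ ^ ((2:ℝ)/D) = 1 := by
      rw [← Real.rpow_add hρ]; norm_num
    have hstep : p.1 ^ 2 ≤ E₀ * ρ ^ ((2:ℝ)/D) :=
      calc p.1 ^ 2 = ρ ^ (-(2/D)) * p.1 ^ 2 * ρ ^ ((2:ℝ)/D) := by
            rw [show ρ ^ (-(2/D)) * p.1 ^ 2 * ρ ^ ((2:ℝ)/D)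
              = p.1 ^ 2 * (ρ ^ (-(2/D)) * ρ ^ ((2:ℝ)/D)) by ring, hinv, mul_one]
        _ ≤ E₀ * ρ ^ ((2:ℝ)/D) := mul_le_mul_of_nonneg_right hx hr2.le
    have hmono : ρ ^ ((2:ℝ)/D) ≤ ((E₀ * (D*(D-2)) / 2) ^ (D/(D-2))) ^ ((2:ℝ)/D) :=
      Real.rpow_le_rpow hρ.le bound2 (by positivity)
    calc p.1 ^ 2 ≤ E₀ * ρ ^ ((2:ℝ)/D) := hstep
      _ ≤ E₀ * ((E₀ * (D*(D-2)) / 2) ^ (D/(D-2))) ^ ((2:ℝ)/D) :=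
          mul_le_mul_of_nonneg_left hmono hE₀.le
noncomputable def wf (D B : ℝ) (p : ℝ × ℝ) : ℝ × ℝ :=
  (-(cl B p.1) ^ 2 - cl B p.2, cl B p.1 * (1 - D * cl B p.2))

lemma wf_eq {D B : ℝ} {p : ℝ × ℝ} (hx : |p.1| ≤ B) (hy : |p.2| ≤ B) : wf D B p = vf D p := by
  rw [wf, vf, cl_eq hx, cl_eq hy]

lemma wf_bound {D B : ℝ} (hB : 1 ≤ B) (hD : 3 ≤ D) (p : ℝ × ℝ) :
    ‖wf D B p‖ ≤ (D+2)*(B+1)^2 := by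
  have hB0 : (0:ℝ) ≤ B := by linarith
  have h1 := abs_cl_le hB0 p.1
  have h2 := abs_cl_le hB0 p.2
  rw [Prod.norm_def, wf]
  apply max_le <;> rw [Real.norm_eq_abs]
  · calc |-(cl B p.1) ^ 2 - cl B p.2| ≤ |(cl B p.1) ^ 2| + |cl B p.2| := by
          rw [show -(cl B p.1) ^ 2 - cl B p.2 = -((cl B p.1) ^ 2 + cl B p.2) by ring, abs_neg]
          exact abs_add_le _ _
      _ ≤ B^2 + B := by
          rw [abs_pow]
          nlinarith [abs_nonneg (cl B p.1), abs_nonneg (cl B p.2), sq_nonneg (B - |cl B p.1|)]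
      _ ≤ (D+2)*(B+1)^2 := by nlinarith
  · calc |cl B p.1 * (1 - D * cl B p.2)| = |cl B p.1| * |1 - D * cl B p.2| := abs_mul _ _
      _ ≤ B * (1 + D * B) := by
          apply mul_le_mul h1 ?_ (abs_nonneg _) hB0
          calc |1 - D * cl B p.2| ≤ |1| + |D * cl B p.2| := abs_sub _ _
            _ ≤ 1 + D * B := by
                rw [abs_one, abs_mul, abs_of_nonneg (by linarith : (0:ℝ) ≤ D)]
                nlinarith
      _ ≤ (D+2)*(B+1)^2 := by nlinarith

lemma wf_lip {D B : ℝ} (hB : 1 ≤ B) (hD : 3 ≤ D) :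
    LipschitzWith (((D+2)*(B+1)^2).toNNReal) (wf D B) := by
  have hB0 : (0:ℝ) ≤ B := by linarith
  have hK : (0:ℝ) ≤ (D+2)*(B+1)^2 := by positivity
  apply LipschitzWith.of_dist_le_mul
  intro p q
  rw [Real.coe_toNNReal _ hK, Prod.dist_eq (x := wf D B p)]
  set Δ := dist p q with hΔ
  have hΔ0 : 0 ≤ Δ := dist_nonneg
  have hd1 : |cl B p.1 - cl B q.1| ≤ Δ := by
    refine (abs_cl_sub_le B _ _).trans ?_
    rw [← Real.dist_eq, hΔ, Prod.dist_eq]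
    exact le_max_left _ _
  have hd2 : |cl B p.2 - cl B q.2| ≤ Δ := by
    refine (abs_cl_sub_le B _ _).trans ?_
    rw [← Real.dist_eq, hΔ, Prod.dist_eq]
    exact le_max_right _ _
  have h1p := abs_cl_le hB0 p.1
  have h1q := abs_cl_le hB0 q.1
  have h2p := abs_cl_le hB0 p.2
  have h2q := abs_cl_le hB0 q.2
  set a := cl B p.1
  set a' := cl B q.1
  set b := cl B p.2
  set b' := cl B q.2
  apply max_le <;> rw [Real.dist_eq]
  · have e : (-a ^ 2 - b) - (-a' ^ 2 - b') = (a' - a) * (a' + a) + (b' - b) := by ring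
    calc |(-a ^ 2 - b) - (-a' ^ 2 - b')| = |(a' - a) * (a' + a) + (b' - b)| := by rw [e]
      _ ≤ |(a' - a) * (a' + a)| + |b' - b| := abs_add_le _ _
      _ = |a' - a| * |a' + a| + |b' - b| := by rw [abs_mul]
      _ ≤ Δ * (2*B) + Δ := by
          have h3 : |a' + a| ≤ 2*B := (abs_add_le _ _).trans (by linarith)
          have h4 : |a' - a| ≤ Δ := by rwa [abs_sub_comm]
          have h5 : |b' - b| ≤ Δ := by rwa [abs_sub_comm]
          nlinarith [abs_nonneg (a' - a), abs_nonneg (a' + a)]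
      _ ≤ (D+2)*(B+1)^2 * Δ := by nlinarith [mul_le_mul_of_nonneg_left hΔ0 (by nlinarith : (0:ℝ) ≤ (D+2)*(B+1)^2 - 2*B - 1)]
  · have e : a * (1 - D*b) - a' * (1 - D*b') = (a - a') * (1 - D*b) + D * a' * (b' - b) := by
      ring
    calc |a * (1 - D*b) - a' * (1 - D*b')|
        = |(a - a') * (1 - D*b) + D * a' * (b' - b)| := by rw [e]
      _ ≤ |(a - a') * (1 - D*b)| + |D * a' * (b' - b)| := abs_add_le _ _
      _ = |a - a'| * |1 - D*b| + |D| * |a'| * |b' - b| := by rw [abs_mul, abs_mul, abs_mul]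
      _ ≤ Δ * (1 + D*B) + D * B * Δ := by
          have h3 : |1 - D*b| ≤ 1 + D*B := by
            refine (abs_sub _ _).trans ?_
            rw [abs_one, abs_mul, abs_of_nonneg (by linarith : (0:ℝ) ≤ D)]
            nlinarith
          have h5 : |b' - b| ≤ Δ := by rwa [abs_sub_comm]
          have hDa : |D| = D := abs_of_nonneg (by linarith)
          rw [hDa]
          nlinarith [abs_nonneg (a - a'), abs_nonneg (b' - b), mul_le_mul hd1 h3
            (abs_nonneg _) hΔ0, mul_le_mul h1q h5 (abs_nonneg _) hB0,
            mul_le_mul_of_nonneg_left (mul_le_mul h1q h5 (abs_nonneg _) hB0)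
              (by linarith : (0:ℝ) ≤ D)]
      _ ≤ (D+2)*(B+1)^2 * Δ := by nlinarith [mul_le_mul_of_nonneg_left hΔ0 (by nlinarith : (0:ℝ) ≤ (D+2)*(B+1)^2 - 1 - 2*D*B)]
end RadialAux


/-- For the radially symmetric system `F' = −F² − G`, `G' = F(1 − dG)` in
dimension `d ≥ 3` with initial data `G(0) < 1/d`, the (maximal) solution is
defined for all `t ≥ 0` and `F`, `G` are bounded on `[0, ∞)`. Since the
right-hand side is smooth, solutions are unique, so this is expressed as the
existence of a globally defined bounded solution with the given initial data. -/
theorem radial_global_bounded_d_ge_three (d : ℕ) (hd : 3 ≤ d) (F₀ G₀ : ℝ)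
    (hG₀ : G₀ < 1 / (d : ℝ)) :
    ∃ F G : ℝ → ℝ, F 0 = F₀ ∧ G 0 = G₀ ∧
      (∀ t : ℝ, 0 ≤ t →
        HasDerivAt F (-(F t) ^ 2 - G t) t ∧
        HasDerivAt G (F t * (1 - (d : ℝ) * G t)) t) ∧
      ∃ M : ℝ, ∀ t : ℝ, 0 ≤ t → |F t| ≤ M ∧ |G t| ≤ M := by
  classical
  open RadialAux Set Real in
  have hD : (3:ℝ) ≤ (d:ℝ) := by exact_mod_cast hd
  set D : ℝ := (d:ℝ) with hDdef
  have hD0 : (0:ℝ) < D := by linarith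
  have hD2 : (0:ℝ) < D - 2 := by linarith
  -- initial data
  set x₀ : ℝ × ℝ := (F₀, G₀) with hx₀def
  have hρ₀ : 0 < 1 - D * x₀.2 := by
    have : G₀ * D < (1/D) * D := mul_lt_mul_of_pos_right hG₀ hD0
    have h1 : (1/D) * D = 1 := by field_simp
    simp only [hx₀def]
    nlinarith
  set E₀ : ℝ := En D x₀ with hE₀def
  have hE₀pos : 0 < E₀ := by
    have h1 : 0 < (1 - D * x₀.2) ^ (-(2/D)) := Real.rpow_pos_of_pos hρ₀ _
    have h2 : 0 < (1 - D * x₀.2) ^ ((1:ℝ) - 2/D) := Real.rpow_pos_of_pos hρ₀ _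
    have h3 : (0:ℝ) < x₀.1 ^ 2 + 1/D := by positivity
    have h4 : (0:ℝ) < 2/(D*(D-2)) := by positivity
    rw [hE₀def, En]
    exact add_pos (mul_pos h1 h3) (mul_pos h4 h2)
  set εK : ℝ := (D * E₀) ^ (-(D/2)) with hεKdef
  set PK : ℝ := (E₀ * (D*(D-2)) / 2) ^ (D/(D-2)) with hPKdef
  set MF2 : ℝ := E₀ * PK ^ ((2:ℝ)/D) with hMF2def
  have hεK : 0 < εK := Real.rpow_pos_of_pos (by positivity) _
  have hPK : 0 < PK := Real.rpow_pos_of_pos (by positivity) _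
  have hMF2 : 0 < MF2 := mul_pos hE₀pos (Real.rpow_pos_of_pos hPK _)
  set B : ℝ := MF2 + PK + 3 with hBdef
  have hB : (1:ℝ) ≤ B := by nlinarith
  -- sets
  set K : Set (ℝ × ℝ) := {p | εK ≤ 1 - D * p.2 ∧ 1 - D * p.2 ≤ PK ∧ p.1 ^ 2 ≤ MF2}
    with hKdef
  set U : Set (ℝ × ℝ) := {p | εK/2 < 1 - D * p.2 ∧ 1 - D * p.2 < PK + 1 ∧ p.1 ^ 2 < MF2 + 1}
    with hUdef
  set K' : Set (ℝ × ℝ) := {p | εK/2 ≤ 1 - D * p.2 ∧ 1 - D * p.2 ≤ PK + 1 ∧ p.1 ^ 2 ≤ MF2 + 1}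
    with hK'def
  have hKU : K ⊆ U := fun p hp => ⟨by linarith [hp.1], by linarith [hp.2.1], by
    linarith [hp.2.2]⟩
  have hUK' : U ⊆ K' := fun p hp => ⟨hp.1.le, hp.2.1.le, hp.2.2.le⟩
  have hcont1 : Continuous (fun p : ℝ × ℝ => 1 - D * p.2) :=
    continuous_const.sub (continuous_const.mul continuous_snd)
  have hcont2 : Continuous (fun p : ℝ × ℝ => p.1 ^ 2) := continuous_fst.pow 2
  have hUopen : IsOpen U := by
    have : U = ((fun p : ℝ × ℝ => 1 - D * p.2) ⁻¹' (Ioi (εK/2))) ∩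
        (((fun p : ℝ × ℝ => 1 - D * p.2) ⁻¹' (Iio (PK + 1))) ∩
          ((fun p : ℝ × ℝ => p.1 ^ 2) ⁻¹' (Iio (MF2 + 1)))) := by
      ext p; simp [hUdef, and_assoc]
    rw [this]
    exact (isOpen_Ioi.preimage hcont1).inter
      ((isOpen_Iio.preimage hcont1).inter (isOpen_Iio.preimage hcont2))
  have hKclosed : IsClosed K := by
    have : K = ((fun p : ℝ × ℝ => 1 - D * p.2) ⁻¹' (Ici εK)) ∩
        (((fun p : ℝ × ℝ => 1 - D * p.2) ⁻¹' (Iic PK)) ∩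
          ((fun p : ℝ × ℝ => p.1 ^ 2) ⁻¹' (Iic MF2))) := by
      ext p; simp [hKdef, and_assoc]
    rw [this]
    exact (isClosed_Ici.preimage hcont1).inter
      ((isClosed_Iic.preimage hcont1).inter (isClosed_Iic.preimage hcont2))
  -- box bounds
  have hbox : ∀ p : ℝ × ℝ, p ∈ K' → |p.1| ≤ B ∧ |p.2| ≤ B := by
    intro p hp
    obtain ⟨h1, h2, h3⟩ := hp
    constructor
    · nlinarith [sq_abs p.1, abs_nonneg p.1]
    · rw [abs_le]
      constructor <;> nlinarith
  -- the global solution of the clamped field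
  obtain ⟨g, hg0, hgD⟩ := global_existence (w := wf D B)
    (C := (D+2)*(B+1)^2) (by positivity) (wf_lip hB hD) (wf_bound hB hD) x₀
  have hgcont : Continuous g := continuous_iff_continuousAt.mpr fun t => (hgD t).continuousAt
  have hwv : ∀ p ∈ K', wf D B p = vf D p := fun p hp =>
    wf_eq (hbox p hp).1 (hbox p hp).2
  have hEd : ∀ t : ℝ, g t ∈ K' → HasDerivAt (fun s => En D (g s)) 0 t := by
    intro t ht
    have h1 : HasDerivAt g (vf D (g t)) t := by rw [← hwv _ ht]; exact hgD t
    exact En_deriv hD h1 (by linarith [ht.1])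
  have hcons : ∀ s : ℝ, 0 ≤ s → (∀ u, 0 ≤ u → u ≤ s → g u ∈ K') → En D (g s) = E₀ := by
    intro s hs hall
    have hcon : ContinuousOn (fun u => En D (g u)) (Icc 0 s) := fun u hu =>
      ((hEd u (hall u hu.1 hu.2)).continuousAt).continuousWithinAt
    have hder : ∀ u ∈ Ico 0 s, HasDerivWithinAt (fun u => En D (g u)) 0 (Ici u) u :=
      fun u hu => (hEd u (hall u hu.1 hu.2.le)).hasDerivWithinAt
    have := constant_of_has_deriv_right_zero hcon hder s ⟨hs, le_rfl⟩
    rw [this, hg0]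
  have hKmem : ∀ s : ℝ, 0 ≤ s → (∀ u, 0 ≤ u → u ≤ s → g u ∈ K') → g s ∈ K := by
    intro s hs hall
    have h2 := hcons s hs hall
    have hρ : 0 < 1 - D * (g s).2 := by linarith [(hall s hs le_rfl).1]
    exact level_bound hD hE₀pos hρ h2
  have hx₀K : x₀ ∈ K := level_bound hD hE₀pos hρ₀ rfl
  -- invariance
  have hinv : ∀ t : ℝ, 0 ≤ t → g t ∈ K' := by
    by_contra hcon
    push_neg at hcon
    obtain ⟨t₁, ht₁0, ht₁⟩ := hcon
    set O : Set ℝ := {t | 0 ≤ t ∧ g t ∉ K'} with hOdef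
    have hne : O.Nonempty := ⟨t₁, ht₁0, ht₁⟩
    have hbdd : BddBelow O := ⟨0, fun o ho => ho.1⟩
    set T : ℝ := sInf O with hTdef
    have hT0 : 0 ≤ T := le_csInf hne fun o ho => ho.1
    have hpre : ∀ u, 0 ≤ u → u < T → g u ∈ K' := by
      intro u h0 hu
      by_contra hc
      exact absurd (csInf_le hbdd ⟨h0, hc⟩) (not_le.2 hu)
    have hgTK : g T ∈ K := by
      rcases eq_or_lt_of_le hT0 with h | h
      · rw [← h, hg0]; exact hx₀K
      · have hKmem' : ∀ s ∈ Ico (0:ℝ) T, g s ∈ K := fun s hs =>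
          hKmem s hs.1 (fun u hu0 hus => hpre u hu0 (lt_of_le_of_lt hus hs.2))
        have hne2 : (nhdsWithin T (Ico (0:ℝ) T)).NeBot := by
          refine mem_closure_iff_nhdsWithin_neBot.mp ?_
          rw [closure_Ico (ne_of_lt h)]
          exact ⟨hT0, le_rfl⟩
        refine hKclosed.mem_of_tendsto
          (hgcont.continuousWithinAt (s := Ico (0:ℝ) T) (x := T)) ?_
        exact eventually_mem_nhdsWithin.mono fun s hs => hKmem' s hs
    have hgTU : g T ∈ U := hKU hgTK
    have hev : ∀ᶠ s in nhds T, g s ∈ U :=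
      hgcont.continuousAt.preimage_mem_nhds (hUopen.mem_nhds hgTU)
    obtain ⟨δ, hδ, hball⟩ := Metric.eventually_nhds_iff.mp hev
    obtain ⟨o, hoO, ho⟩ := exists_lt_of_csInf_lt hne (lt_add_of_pos_right T hδ)
    have hTo : T ≤ o := csInf_le hbdd hoO
    have : g o ∈ U := by
      apply hball
      rw [Real.dist_eq, abs_lt]
      constructor <;> linarith
    exact hoO.2 (hUK' this)
  -- conclude
  refine ⟨fun t => (g t).1, fun t => (g t).2, by show (g 0).1 = F₀; rw [hg0],
    by show (g 0).2 = G₀; rw [hg0], ?_, B, ?_⟩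
  · intro t ht
    have hgt := hgD t
    rw [hwv _ (hinv t ht)] at hgt
    exact ⟨hasDerivAt_fst hgt, hasDerivAt_snd hgt⟩
  · intro t ht
    exact hbox (g t) (hinv t ht)
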